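/- Let X be a Banach lattice whose norm is strictly monotone on disjoint decompositions in the sense that ‖v₁ + v₂‖^p = ‖v₁‖^p + ‖v₂‖^p for disjoint v₁, v₂ (p ∈ (1,∞) fixed). Let P be a contractive projection on X and u ∈ range(P) with u = u·χ_A + u·χ_B, where χ_A, χ_B are band projections onto complementary bands. If ‖P(u·χ_A) restricted to band B‖ is denoted r, and P(u·χ_A) + P(u·χ_B) = u with the band projection of P(u·χ_B) contained in band B, then the band-B component of P(u·χ_A) is zero. -/

import Mathlib

theorem stmt11 {X : Type*} [NormedAddCommGroup X] [Lattice X] [HasSolidNorm X] [IsOrderedAddMonoid X] [Module ℝ X]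
    (p : ℝ) (hp1 : 1 < p)
    (hpadd : ∀ v w : X, |v| ⊓ |w| = 0 → ‖v + w‖ ^ p = ‖v‖ ^ p + ‖w‖ ^ p)
    (P : X →ₗ[ℝ] X) (hP2 : ∀ x, P (P x) = P x) (hPc : ∀ x, ‖P x‖ ≤ ‖x‖)
    (πA πB : X →ₗ[ℝ] X)
    (hcompl : ∀ x, πA x + πB x = x)
    (hAB : ∀ x y : X, |πA x| ⊓ |πB y| = 0)
    (hAcontr : ∀ x : X, |πA x| ≤ |x|) (hBcontr : ∀ x : X, |πB x| ≤ |x|)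
    (u : X) (hu : P u = u)
    (hsupp : πA (P (πB u)) = 0) :
    πB (P (πA u)) = 0 ∧ P (πA u) = πA u := by
  have hp0 : (0 : ℝ) < p := lt_trans one_pos hp1
  -- πA (P (πA u)) = πA u
  have ha1 : πA (P (πA u)) = πA u := by
    have h1 : P (πA u) + P (πB u) = u := by
      rw [← map_add, hcompl, hu]
    have h2 : πA (P (πA u)) + πA (P (πB u)) = πA u := by
      rw [← map_add, h1]
    rwa [hsupp, add_zero] at h2
  -- norm computation
  have hdisj : |πA (P (πA u))| ⊓ |πB (P (πA u))| = 0 := hAB _ _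
  have hn : ‖P (πA u)‖ ^ p = ‖πA u‖ ^ p + ‖πB (P (πA u))‖ ^ p := by
    calc ‖P (πA u)‖ ^ p = ‖πA (P (πA u)) + πB (P (πA u))‖ ^ p := by rw [hcompl]
      _ = ‖πA (P (πA u))‖ ^ p + ‖πB (P (πA u))‖ ^ p := hpadd _ _ hdisj
      _ = ‖πA u‖ ^ p + ‖πB (P (πA u))‖ ^ p := by rw [ha1]
  have hle : ‖P (πA u)‖ ^ p ≤ ‖πA u‖ ^ p :=
    Real.rpow_le_rpow (norm_nonneg _) (hPc _) hp0.le
  have hz : ‖πB (P (πA u))‖ ^ p = 0 :=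
    le_antisymm (by linarith) (Real.rpow_nonneg (norm_nonneg _) _)
  have hz' : πB (P (πA u)) = 0 := by
    have := (Real.rpow_eq_zero (norm_nonneg _) (ne_of_gt hp0)).mp hz
    exact norm_eq_zero.mp this
  refine ⟨hz', ?_⟩
  have := hcompl (P (πA u))
  rw [ha1, hz', add_zero] at this
  exact this.symm
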